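/- In the NE-HPE framework, for every k ≥ 1 and z ∈ dom w: (dw)_{z_{k-1}}(z) - (dw)_{z_k}(z) + η_{k-1} ≥ (1-σ)(dw)_{z_{k-1}}(z̃_k) + λ_k(⟨r_k, z̃_k - z⟩ + ε_k) + η_k. -/

import Mathlib

/-- NE-HPE framework, key inequality. With `dw` the Bregman distance of a distance
generating function `w` with gradient `g`, iterates `z_k, z̃_k`, `λ_k > 0`,
`r_k = (1/λ_k)(∇w(z_{k-1}) - ∇w(z_k))`, `ε_k, η_k ≥ 0`, `σ ∈ [0,1]`, and the error
condition `(dw)_{z_k}(z̃_k) + λ_k ε_k + η_k ≤ σ (dw)_{z_{k-1}}(z̃_k) + η_{k-1}`, one has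
for every `k ≥ 1` and every `z`:
`(dw)_{z_{k-1}}(z) - (dw)_{z_k}(z) + η_{k-1}
  ≥ (1-σ)(dw)_{z_{k-1}}(z̃_k) + λ_k(⟨r_k, z̃_k - z⟩ + ε_k) + η_k`. -/
theorem nehpe_key_inequality {Z : Type*} [NormedAddCommGroup Z] [InnerProductSpace ℝ Z]
    [FiniteDimensional ℝ Z]
    (w : Z → ℝ) (g : Z → Z)
    (dw : Z → Z → ℝ)
    (hdw : ∀ z z' : Z, dw z z' = w z' - w z - (inner ℝ (g z) (z' - z) : ℝ))
    (z ztil : ℕ → Z) (lam eps eta : ℕ → ℝ) (r : ℕ → Z) (σ : ℝ)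
    (hσ : σ ∈ Set.Icc (0 : ℝ) 1)
    (hlam : ∀ k, 1 ≤ k → 0 < lam k)
    (heps : ∀ k, 1 ≤ k → 0 ≤ eps k)
    (heta : ∀ k, 0 ≤ eta k)
    (hr : ∀ k, 1 ≤ k → r k = (1 / lam k) • (g (z (k - 1)) - g (z k)))
    (herr : ∀ k, 1 ≤ k →
      dw (z k) (ztil k) + lam k * eps k + eta k ≤ σ * dw (z (k - 1)) (ztil k) + eta (k - 1))
    (k : ℕ) (hk : 1 ≤ k) (zz : Z) :
    dw (z (k - 1)) zz - dw (z k) zz + eta (k - 1)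
      ≥ (1 - σ) * dw (z (k - 1)) (ztil k)
        + lam k * ((inner ℝ (r k) (ztil k - zz) : ℝ) + eps k) + eta k := by
  have hl := hlam k hk
  have herrk := herr k hk
  have hinner : lam k * ((inner ℝ (r k) (ztil k - zz) : ℝ) + eps k)
      = (inner ℝ (g (z (k-1)) - g (z k)) (ztil k - zz) : ℝ) + lam k * eps k := by
    rw [hr k hk, real_inner_smul_left]
    field_simp
  rw [hinner]
  simp only [hdw, inner_sub_left, inner_sub_right] at herrk ⊢
  nlinarith [herrk]
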